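/- Let B be a linearly ordered alphabet and consider the free F-algebra FB* on B (with basis all words). Fix for each pair b, c ∈ B an element [bc] ∈ FB spanned by single letters, and a scalar χ(b,c) ∈ F. Suppose λ : FB* → FB* is a linear map satisfying λ(f) = f for every non-increasing word f, and λ(u b c v) = χ(b,c) λ(u c b v) + λ(u [bc] v) whenever b ≺ c. Then for every word w, λ(w) lies in the span of non-increasing words (the image of λ is contained in FP, where P is the set of non-increasing words). -/

import Mathlib

open MonoidAlgebra

/-- A word (free monoid element) is non-increasing if its letters weakly decrease. -/
def NonIncreasing {B : Type*} [LinearOrder B] (w : FreeMonoid B) : Prop :=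
  List.Chain' (fun x y => y ≤ x) (FreeMonoid.toList w)

/-- Count of inversions (pairs out of order) in a list. -/
def invCount {B : Type*} [LinearOrder B] : List B → ℕ
  | [] => 0
  | a :: l => (l.countP fun x => decide (a < x)) + invCount l

lemma invCount_le_sq {B : Type*} [LinearOrder B] (l : List B) :
    invCount l ≤ l.length * l.length := by
  induction l with
  | nil => simp [invCount]
  | cons a l ih =>
    have h1 : (l.countP fun x => decide (a < x)) ≤ l.length := List.countP_le_length
    simp only [invCount, List.length_cons]
    nlinarith

lemma countP_pair_comm {B : Type*} [LinearOrder B] (p : B → Bool) (b c : B) (v : List B) :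
    ((c :: b :: v).countP p) = ((b :: c :: v).countP p) := by
  simp only [List.countP_cons]; omega

lemma invCount_swap {B : Type*} [LinearOrder B] (u v : List B) {b c : B} (h : b < c) :
    invCount (u ++ c :: b :: v) + 1 = invCount (u ++ b :: c :: v) := by
  induction u with
  | nil =>
    simp only [List.nil_append, invCount, List.countP_cons]
    simp [h, not_lt_of_gt h]
    omega
  | cons a u ih =>
    simp only [List.cons_append, List.append_eq, invCount, List.countP_append]
    rw [countP_pair_comm]
    omega

/-- Measure for the straightening induction. -/
def strMeasure {B : Type*} [LinearOrder B] (l : List B) : ℕ :=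
  l.length * l.length * l.length + invCount l

lemma not_chain'_split {B : Type*} [LinearOrder B] :
    ∀ l : List B, ¬ List.Chain' (fun x y => y ≤ x) l →
      ∃ (u : List B) (b c : B) (v : List B), l = u ++ b :: c :: v ∧ b < c := by
  intro l
  induction l with
  | nil => intro h; exact absurd List.isChain_nil h
  | cons a l ih =>
    intro h
    match l, h with
    | [], h => exact absurd (List.isChain_singleton a) h
    | b :: t, h =>
      simp only [List.Chain', List.isChain_cons_cons] at h
      push_neg at h
      by_cases hab : b ≤ a
      · obtain ⟨u, b', c', v, hl, hbc⟩ := ih (h hab)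
        exact ⟨a :: u, b', c', v, by rw [hl]; rfl, hbc⟩
      · exact ⟨[], a, b, t, rfl, lt_of_not_ge hab⟩

/-- If a linear map λ on the free algebra FB* fixes non-increasing words and satisfies
the straightening rule λ(ubcv) = χ(b,c)λ(ucbv) + λ(u[bc]v) for b ≺ c, then the image
of every word under λ lies in the span FP of non-increasing words. -/
theorem straightening_image {F : Type*} [Field F] {B : Type*} [LinearOrder B]
    (χ : B → B → F) (br : B → B → (B →₀ F))
    (lam : MonoidAlgebra F (FreeMonoid B) →ₗ[F] MonoidAlgebra F (FreeMonoid B))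
    (emb : (B →₀ F) →ₗ[F] MonoidAlgebra F (FreeMonoid B))
    (hemb : ∀ b : B, emb (Finsupp.single b 1) =
      MonoidAlgebra.single (FreeMonoid.of b) (1 : F))
    (hfix : ∀ f : FreeMonoid B, NonIncreasing f →
      lam (MonoidAlgebra.single f (1 : F)) = MonoidAlgebra.single f (1 : F))
    (hrule : ∀ (u v : FreeMonoid B) (b c : B), b < c →
      lam (MonoidAlgebra.single (u * FreeMonoid.of b * FreeMonoid.of c * v) (1 : F))
        = χ b c • lam (MonoidAlgebra.single
            (u * FreeMonoid.of c * FreeMonoid.of b * v) (1 : F))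
          + lam (MonoidAlgebra.single u (1 : F) * emb (br b c)
              * MonoidAlgebra.single v (1 : F))) :
    ∀ w : FreeMonoid B, lam (MonoidAlgebra.single w (1 : F)) ∈
      Submodule.span F {x : MonoidAlgebra F (FreeMonoid B) |
        ∃ p : FreeMonoid B, NonIncreasing p ∧ x = MonoidAlgebra.single p (1 : F)} := by
  set S := Submodule.span F {x : MonoidAlgebra F (FreeMonoid B) |
        ∃ p : FreeMonoid B, NonIncreasing p ∧ x = MonoidAlgebra.single p (1 : F)} with hS
  suffices H : ∀ n, ∀ w : FreeMonoid B, strMeasure (FreeMonoid.toList w) < n →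
      lam (MonoidAlgebra.single w (1 : F)) ∈ S by
    exact fun w => H (strMeasure (FreeMonoid.toList w) + 1) w (Nat.lt_succ_self _)
  intro n
  induction n with
  | zero => exact fun w h => absurd h (Nat.not_lt_zero _)
  | succ n ih =>
    intro w hmu
    by_cases hni : NonIncreasing w
    · rw [hfix w hni]
      exact Submodule.subset_span ⟨w, hni, rfl⟩
    · obtain ⟨U, b, c, V, hl, hbc⟩ := not_chain'_split _ hni
      set u := FreeMonoid.ofList U with hu
      set v := FreeMonoid.ofList V with hv
      have hw : w = u * FreeMonoid.of b * FreeMonoid.of c * v := by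
        apply FreeMonoid.toList.injective
        simp [hu, hv, hl]
      have hlen : (FreeMonoid.toList w).length = U.length + V.length + 2 := by
        rw [hl]; simp; omega
      rw [hw, hrule u v b c hbc]
      apply Submodule.add_mem
      · apply Submodule.smul_mem
        apply ih
        have h1 : FreeMonoid.toList (u * FreeMonoid.of c * FreeMonoid.of b * v)
            = U ++ c :: b :: V := by simp [hu, hv]
        have h2 : FreeMonoid.toList w = U ++ b :: c :: V := hl
        have hswap := invCount_swap U V hbc
        have : strMeasure (U ++ c :: b :: V) < strMeasure (U ++ b :: c :: V) := by
          unfold strMeasure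
          have : (U ++ c :: b :: V).length = (U ++ b :: c :: V).length := by simp
          rw [this]; omega
        rw [h1]; rw [h2] at hmu; omega
      · -- middle term
        have hembf : emb (br b c) = (br b c).sum fun a r =>
            r • MonoidAlgebra.single (FreeMonoid.of a) (1 : F) := by
          conv_lhs => rw [← Finsupp.sum_single (br b c)]
          rw [map_finsuppSum]
          apply Finsupp.sum_congr
          intro a _
          rw [show Finsupp.single a (br b c a) = (br b c a) • Finsupp.single a (1 : F) by
            rw [Finsupp.smul_single', mul_one], map_smul, hemb]
        rw [hembf, Finsupp.sum]
        rw [Finset.mul_sum, Finset.sum_mul, map_sum]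
        apply Submodule.sum_mem
        intro a _
        have : MonoidAlgebra.single u (1 : F) *
            ((br b c) a • MonoidAlgebra.single (FreeMonoid.of a) (1 : F)) *
            MonoidAlgebra.single v (1 : F)
            = (br b c) a • MonoidAlgebra.single (u * FreeMonoid.of a * v) (1 : F) := by
          rw [mul_smul_comm, smul_mul_assoc, MonoidAlgebra.single_mul_single,
            MonoidAlgebra.single_mul_single, one_mul, one_mul]
        rw [this, map_smul]
        apply Submodule.smul_mem
        apply ih
        have h3 : FreeMonoid.toList (u * FreeMonoid.of a * v) = U ++ a :: V := by
          simp [hu, hv]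
        rw [h3]
        have hbound := invCount_le_sq (U ++ a :: V)
        have hlen3 : (U ++ a :: V).length + 1 = (FreeMonoid.toList w).length := by
          simp [hlen]; omega
        unfold strMeasure at hmu ⊢
        set m := (U ++ a :: V).length
        have hm : (FreeMonoid.toList w).length = m + 1 := hlen3.symm
        rw [hm] at hmu
        nlinarith [hmu, hbound]
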